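/- Let d ≥ 1 be an integer, α ∈ (0,2) and K > 0. Then there exists a constant C > 0 such that for every l ≥ 1 and every function f : ℝ^d → [0,1] satisfying f(x) = 0 for all |x| ≥ 2l and |f(x) − f(y)| ≤ (K/l)|x − y| for all x, y ∈ ℝ^d, one has D(f,f) ≤ C·l^{d−α}. -/

import Mathlib

open MeasureTheory Metric Set
open scoped ENNReal NNReal

/-- The fractional Dirichlet energy
`D(f,f) = ∫∫ (f(x) − f(y))² / |x − y|^{d+α} dx dy` on `ℝ^d`. -/
noncomputable def fracD (d : ℕ) (α : ℝ) (f : EuclideanSpace ℝ (Fin d) → ℝ) : ℝ :=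
  ∫ x, ∫ y, (f x - f y) ^ 2 / ‖x - y‖ ^ ((d : ℝ) + α)


lemma of_lintegral_bound {X : Type*} [MeasurableSpace X] {μ : Measure X} {f : X → ℝ} {s : Set X}
    (hf : Measurable f) (h0 : ∀ x, 0 ≤ f x) {B : ℝ} (hB : 0 ≤ B)
    (h : ∫⁻ x in s, ENNReal.ofReal (f x) ∂μ ≤ ENNReal.ofReal B) :
    IntegrableOn f s μ ∧ ∫ x in s, f x ∂μ ≤ B := by
  have hmeas : AEStronglyMeasurable f (μ.restrict s) := hf.aestronglyMeasurable
  have hnorm : ∀ x, (‖f x‖₊ : ℝ≥0∞) = ENNReal.ofReal (f x) := fun x => by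
    exact Real.enorm_eq_ofReal (h0 x)
  have hfin : HasFiniteIntegral f (μ.restrict s) := by
    rw [HasFiniteIntegral]
    calc ∫⁻ a, (‖f a‖₊ : ℝ≥0∞) ∂μ.restrict s = ∫⁻ a, ENNReal.ofReal (f a) ∂μ.restrict s := by
          simp_rw [hnorm]
      _ ≤ ENNReal.ofReal B := h
      _ < ⊤ := ENNReal.ofReal_lt_top
  refine ⟨⟨hmeas, hfin⟩, ?_⟩
  rw [integral_eq_lintegral_of_nonneg_ae (Filter.Eventually.of_forall h0) hmeas]
  calc (∫⁻ a, ENNReal.ofReal (f a) ∂μ.restrict s).toReal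
      ≤ (ENNReal.ofReal B).toReal := ENNReal.toReal_mono ENNReal.ofReal_ne_top h
    _ = B := ENNReal.toReal_ofReal hB

lemma cover_ball {E : Type*} [NormedAddCommGroup E] {R : ℝ} (hR : 0 < R) :
    closedBall (0:E) R \ {0} ⊆
      ⋃ k : ℕ, (closedBall (0:E) (R * (2⁻¹:ℝ) ^ k) \ closedBall 0 (R * (2⁻¹:ℝ) ^ (k+1))) := by
  intro z hz
  have hz0 : 0 < ‖z‖ := by
    simpa [norm_pos_iff] using (by simpa using hz.2 : z ≠ 0)
  have hzR : ‖z‖ ≤ R := by simpa [mem_closedBall, dist_zero_right] using hz.1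
  have hex : ∃ n : ℕ, (2⁻¹:ℝ) ^ n < ‖z‖ / R :=
    exists_pow_lt_of_lt_one (div_pos hz0 hR) (by norm_num)
  classical
  let n₀ := Nat.find hex
  have hn₀ : (2⁻¹:ℝ) ^ n₀ < ‖z‖ / R := Nat.find_spec hex
  have hn₀pos : n₀ ≠ 0 := by
    intro h
    have h2 := hn₀
    rw [h] at h2
    simp only [pow_zero] at h2
    have h1 : ‖z‖ / R ≤ 1 := (div_le_one hR).mpr hzR
    linarith
  obtain ⟨k, hk⟩ := Nat.exists_eq_succ_of_ne_zero hn₀pos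
  have hmin : ¬ ((2⁻¹:ℝ) ^ k < ‖z‖ / R) := Nat.find_min hex (by omega)
  push_neg at hmin
  refine mem_iUnion.2 ⟨k, ?_, ?_⟩
  · rw [mem_closedBall, dist_zero_right]
    calc ‖z‖ = (‖z‖ / R) * R := by field_simp
      _ ≤ (2⁻¹:ℝ) ^ k * R := by nlinarith
      _ = R * (2⁻¹:ℝ) ^ k := by ring
  · rw [mem_closedBall, dist_zero_right]
    push_neg
    have : R * (2⁻¹:ℝ)^(k+1) < (‖z‖/R) * R := by
      have h3 := hn₀; rw [hk] at h3
      have := mul_lt_mul_of_pos_right h3 hR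
      calc R * (2⁻¹:ℝ)^(k+1) = (2⁻¹:ℝ)^(k.succ) * R := by
            rw [Nat.succ_eq_add_one]; ring
        _ < (‖z‖/R) * R := this
    calc R * (2⁻¹:ℝ)^(k+1) < (‖z‖/R)*R := this
      _ = ‖z‖ := by field_simp

lemma cover_compl {E : Type*} [NormedAddCommGroup E] {R : ℝ} (hR : 0 < R) :
    (closedBall (0:E) R)ᶜ ⊆
      ⋃ k : ℕ, (closedBall (0:E) (R * (2:ℝ) ^ (k+1)) \ closedBall 0 (R * (2:ℝ) ^ k)) := by
  intro z hz
  have hzR : R < ‖z‖ := by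
    simpa [mem_closedBall, dist_zero_right, not_le] using hz
  have hex : ∃ n : ℕ, ‖z‖ ≤ R * (2:ℝ) ^ n := by
    obtain ⟨n, hn⟩ := pow_unbounded_of_one_lt (‖z‖ / R) (by norm_num : (1:ℝ) < 2)
    exact ⟨n, by rw [div_lt_iff₀ hR] at hn; linarith [hn]⟩
  classical
  let n₀ := Nat.find hex
  have hn₀ : ‖z‖ ≤ R * (2:ℝ) ^ n₀ := Nat.find_spec hex
  have hn₀pos : n₀ ≠ 0 := by
    intro h
    have := hn₀; rw [h] at this; simp at this; linarith
  obtain ⟨k, hk⟩ := Nat.exists_eq_succ_of_ne_zero hn₀pos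
  have hmin : ¬ (‖z‖ ≤ R * (2:ℝ) ^ k) := Nat.find_min hex (by omega)
  push_neg at hmin
  refine mem_iUnion.2 ⟨k, ?_, ?_⟩
  · rw [mem_closedBall, dist_zero_right]
    rw [hk] at hn₀; exact hn₀
  · rw [mem_closedBall, dist_zero_right]; push_neg; exact hmin

lemma annulus_bound (d : ℕ) (hd : 1 ≤ d) {s r₁ r₂ : ℝ} (h1 : 0 < r₁) (h2 : 0 ≤ r₂)
    (hs : s ≤ 0) :
    ∫⁻ z in closedBall (0:EuclideanSpace ℝ (Fin d)) r₂ \ closedBall 0 r₁,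
        ENNReal.ofReal (‖z‖ ^ s)
      ≤ ENNReal.ofReal (r₁ ^ s * r₂ ^ (d:ℝ)) * volume (ball (0:EuclideanSpace ℝ (Fin d)) 1) := by
  haveI : Nonempty (Fin d) := ⟨⟨0, hd⟩⟩
  set A := closedBall (0:EuclideanSpace ℝ (Fin d)) r₂ \ closedBall 0 r₁ with hA
  have hAm : MeasurableSet A := measurableSet_closedBall.diff measurableSet_closedBall
  have step1 : ∫⁻ z in A, ENNReal.ofReal (‖z‖ ^ s) ≤ ∫⁻ _ in A, ENNReal.ofReal (r₁ ^ s) := by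
    refine setLIntegral_mono' hAm fun z hz => ?_
    apply ENNReal.ofReal_le_ofReal
    have hz1 : r₁ < ‖z‖ := by
      have := hz.2
      simpa [mem_closedBall, dist_zero_right, not_le] using this
    exact Real.rpow_le_rpow_of_nonpos h1 hz1.le hs
  have step2 : ∫⁻ _ in A, ENNReal.ofReal (r₁ ^ s) = ENNReal.ofReal (r₁ ^ s) * volume A :=
    setLIntegral_const _ _
  have step3 : volume A ≤ ENNReal.ofReal (r₂ ^ (d:ℝ)) * volume (ball (0:EuclideanSpace ℝ (Fin d)) 1) := by
    calc volume A ≤ volume (closedBall (0:EuclideanSpace ℝ (Fin d)) r₂) :=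
          measure_mono diff_subset
      _ = ENNReal.ofReal (r₂ ^ d) * volume (ball (0:EuclideanSpace ℝ (Fin d)) 1) := by
          rw [Measure.addHaar_closedBall _ _ h2, finrank_euclideanSpace_fin]
      _ = ENNReal.ofReal (r₂ ^ (d:ℝ)) * volume (ball (0:EuclideanSpace ℝ (Fin d)) 1) := by
          rw [← Real.rpow_natCast r₂ d]
  calc ∫⁻ z in A, ENNReal.ofReal (‖z‖ ^ s) ≤ ENNReal.ofReal (r₁ ^ s) * volume A :=
        step1.trans_eq step2
    _ ≤ ENNReal.ofReal (r₁ ^ s) * (ENNReal.ofReal (r₂ ^ (d:ℝ)) * volume (ball (0:EuclideanSpace ℝ (Fin d)) 1)) :=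
        mul_le_mul_right step3 _
    _ = ENNReal.ofReal (r₁ ^ s * r₂ ^ (d:ℝ)) * volume (ball (0:EuclideanSpace ℝ (Fin d)) 1) := by
        rw [ENNReal.ofReal_mul (Real.rpow_nonneg h1.le _), mul_assoc]

lemma rpow_geom (R u s : ℝ) (d : ℕ) (hR : 0 < R) (hu : 0 < u) (k : ℕ) :
    (R * u ^ (k+1)) ^ s * (R * u ^ k) ^ (d:ℝ)
      = (R ^ (s + (d:ℝ)) * u ^ s) * ((u ^ (s + (d:ℝ))) ^ k) := by
  have h1 : (0:ℝ) < u ^ (k+1) := by positivity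
  have h2 : (0:ℝ) < u ^ k := by positivity
  rw [Real.mul_rpow hR.le h1.le, Real.mul_rpow hR.le h2.le,
    ← Real.rpow_natCast u k, ← Real.rpow_natCast u (k+1),
    ← Real.rpow_mul hu.le, ← Real.rpow_mul hu.le,
    ← Real.rpow_natCast (u ^ (s + (d:ℝ))) k, ← Real.rpow_mul hu.le,
    Real.rpow_add hR]
  rw [show (R ^ s * u ^ ((↑(k + 1):ℝ) * s) * (R ^ (d:ℝ) * u ^ ((k:ℝ) * (d:ℝ)))) =
      (R ^ s * R ^ (d:ℝ)) * (u ^ ((↑(k + 1):ℝ) * s) * u ^ ((k:ℝ) * (d:ℝ))) by ring,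
    ← Real.rpow_add hu,
    show (R ^ s * R ^ (d:ℝ) * u ^ s * u ^ ((s + (d:ℝ)) * (k:ℝ))) =
      (R ^ s * R ^ (d:ℝ)) * (u ^ s * u ^ ((s + (d:ℝ)) * (k:ℝ))) by ring,
    ← Real.rpow_add hu]
  congr 1
  push_cast
  ring

lemma rpow_geom2 (R u s : ℝ) (d : ℕ) (hR : 0 < R) (hu : 0 < u) (k : ℕ) :
    (R * u ^ k) ^ s * (R * u ^ (k+1)) ^ (d:ℝ)
      = (R ^ (s + (d:ℝ)) * u ^ (d:ℝ)) * ((u ^ (s + (d:ℝ))) ^ k) := by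
  have h1 : (0:ℝ) < u ^ (k+1) := by positivity
  have h2 : (0:ℝ) < u ^ k := by positivity
  rw [Real.mul_rpow hR.le h2.le, Real.mul_rpow hR.le h1.le,
    ← Real.rpow_natCast u k, ← Real.rpow_natCast u (k+1),
    ← Real.rpow_mul hu.le, ← Real.rpow_mul hu.le,
    ← Real.rpow_natCast (u ^ (s + (d:ℝ))) k, ← Real.rpow_mul hu.le,
    Real.rpow_add hR]
  rw [show (R ^ s * u ^ ((k:ℝ) * s) * (R ^ (d:ℝ) * u ^ ((↑(k+1):ℝ) * (d:ℝ)))) =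
      (R ^ s * R ^ (d:ℝ)) * (u ^ ((k:ℝ) * s) * u ^ ((↑(k+1):ℝ) * (d:ℝ))) by ring,
    ← Real.rpow_add hu,
    show (R ^ s * R ^ (d:ℝ) * u ^ (d:ℝ) * u ^ ((s + (d:ℝ)) * (k:ℝ))) =
      (R ^ s * R ^ (d:ℝ)) * (u ^ (d:ℝ) * u ^ ((s + (d:ℝ)) * (k:ℝ))) by ring,
    ← Real.rpow_add hu]
  congr 1
  push_cast
  ring

lemma L1 (d : ℕ) (hd : 1 ≤ d) {s : ℝ} (hds : -(d:ℝ) < s) :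
    ∃ c : ℝ, 0 < c ∧ ∀ R : ℝ, 0 < R →
      IntegrableOn (fun z : EuclideanSpace ℝ (Fin d) => ‖z‖ ^ s) (closedBall 0 R) volume ∧
      ∫ z in closedBall (0:EuclideanSpace ℝ (Fin d)) R, ‖z‖ ^ s ≤ c * R ^ (s + (d:ℝ)) := by
  haveI : Nonempty (Fin d) := ⟨⟨0, hd⟩⟩
  set E := EuclideanSpace ℝ (Fin d)
  set v₁ : ℝ := (volume (ball (0:E) 1)).toReal with hv₁
  have hv₁fin : volume (ball (0:E) 1) ≠ ⊤ := measure_ball_lt_top.ne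
  have hv₁pos : 0 < v₁ := ENNReal.toReal_pos (measure_ball_pos _ _ one_pos).ne' hv₁fin
  have hvol : volume (ball (0:E) 1) = ENNReal.ofReal v₁ := (ENNReal.ofReal_toReal hv₁fin).symm
  have hmeas : Measurable (fun z : E => ‖z‖ ^ s) := by fun_prop
  have hnn : ∀ z : E, 0 ≤ ‖z‖ ^ s := fun z => Real.rpow_nonneg (norm_nonneg z) _
  rcases le_or_gt s 0 with hs | hs
  · -- singular case
    set u : ℝ := (2:ℝ)⁻¹ with hu
    have hu0 : (0:ℝ) < u := by norm_num
    set q : ℝ := u ^ (s + (d:ℝ)) with hq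
    have hsd : 0 < s + (d:ℝ) := by linarith
    have hq0 : 0 ≤ q := Real.rpow_nonneg hu0.le _
    have hq1 : q < 1 := Real.rpow_lt_one hu0.le (by norm_num) hsd
    have hX : 0 < u ^ s * (1 - q)⁻¹ * v₁ :=
      mul_pos (mul_pos (Real.rpow_pos_of_pos hu0 _) (inv_pos.mpr (by linarith))) hv₁pos
    refine ⟨u ^ s * (1 - q)⁻¹ * v₁ + 1, by linarith, fun R hR => ?_⟩
    have hB : (0:ℝ) ≤ (u ^ s * (1 - q)⁻¹ * v₁ + 1) * R ^ (s + (d:ℝ)) :=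
      mul_nonneg (by linarith) (Real.rpow_nonneg hR.le _)
    refine of_lintegral_bound hmeas hnn hB ?_
    have key : ∫⁻ z in closedBall (0:E) R, ENNReal.ofReal (‖z‖ ^ s)
        ≤ ∑' k : ℕ, ∫⁻ z in closedBall (0:E) (R * u ^ k) \ closedBall 0 (R * u ^ (k+1)),
            ENNReal.ofReal (‖z‖ ^ s) := by
      have e1 : ∫⁻ z in closedBall (0:E) R, ENNReal.ofReal (‖z‖ ^ s)
          = ∫⁻ z in closedBall (0:E) R \ {0}, ENNReal.ofReal (‖z‖ ^ s) := by
        refine (setLIntegral_congr ?_).symm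
        rw [diff_ae_eq_self]
        exact measure_mono_null inter_subset_right (measure_singleton _)
      rw [e1]
      refine le_trans (lintegral_mono_set (cover_ball hR)) (lintegral_iUnion_le _ _)
    have term : ∀ k : ℕ, ∫⁻ z in closedBall (0:E) (R * u ^ k) \ closedBall 0 (R * u ^ (k+1)),
        ENNReal.ofReal (‖z‖ ^ s)
        ≤ ENNReal.ofReal (R ^ (s + (d:ℝ)) * u ^ s) * ENNReal.ofReal q ^ k
            * ENNReal.ofReal v₁ := by
      intro k
      have h1 : (0:ℝ) < R * u ^ (k+1) := by positivity
      have h2 : (0:ℝ) ≤ R * u ^ k := by positivity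
      calc ∫⁻ z in closedBall (0:E) (R * u ^ k) \ closedBall 0 (R * u ^ (k+1)),
            ENNReal.ofReal (‖z‖ ^ s)
          ≤ ENNReal.ofReal ((R * u ^ (k+1)) ^ s * (R * u ^ k) ^ (d:ℝ)) * volume (ball (0:E) 1) :=
            annulus_bound d hd h1 h2 hs
        _ = ENNReal.ofReal (R ^ (s + (d:ℝ)) * u ^ s) * ENNReal.ofReal q ^ k
              * ENNReal.ofReal v₁ := by
            rw [rpow_geom R u s d hR hu0, hvol,
              ENNReal.ofReal_mul (by positivity), ENNReal.ofReal_pow hq0]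
    calc ∫⁻ z in closedBall (0:E) R, ENNReal.ofReal (‖z‖ ^ s)
        ≤ ∑' k : ℕ, ENNReal.ofReal (R ^ (s + (d:ℝ)) * u ^ s) * ENNReal.ofReal q ^ k
            * ENNReal.ofReal v₁ := key.trans (ENNReal.tsum_le_tsum term)
      _ = ENNReal.ofReal (R ^ (s + (d:ℝ)) * u ^ s) * ENNReal.ofReal v₁
            * (1 - ENNReal.ofReal q)⁻¹ := by
          rw [ENNReal.tsum_mul_right, ENNReal.tsum_mul_left, ENNReal.tsum_geometric]
          ring
      _ = ENNReal.ofReal (R ^ (s + (d:ℝ)) * u ^ s * v₁ * (1-q)⁻¹) := by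
          rw [← ENNReal.ofReal_one, ← ENNReal.ofReal_sub _ hq0,
            ← ENNReal.ofReal_inv_of_pos (by linarith : (0:ℝ) < 1 - q),
            ← ENNReal.ofReal_mul (by positivity),
            ← ENNReal.ofReal_mul (by positivity)]
      _ ≤ ENNReal.ofReal ((u ^ s * (1 - q)⁻¹ * v₁ + 1) * R ^ (s + (d:ℝ))) := by
          apply ENNReal.ofReal_le_ofReal
          have h3 : 0 ≤ R ^ (s + (d:ℝ)) := Real.rpow_nonneg hR.le _
          nlinarith [hX]
  · -- bounded case
    refine ⟨v₁ + 1, by linarith, fun R hR => ?_⟩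
    have hbd : ∀ z ∈ closedBall (0:E) R, ‖z‖ ^ s ≤ R ^ s := by
      intro z hz
      rw [mem_closedBall, dist_zero_right] at hz
      exact Real.rpow_le_rpow (norm_nonneg z) hz hs.le
    have hint : IntegrableOn (fun z : E => ‖z‖ ^ s) (closedBall 0 R) volume := by
      refine Measure.integrableOn_of_bounded (M := R ^ s) measure_closedBall_lt_top.ne
        hmeas.aestronglyMeasurable ?_
      refine (ae_restrict_iff' measurableSet_closedBall).2 (Filter.Eventually.of_forall ?_)
      intro z hz
      rw [Real.norm_eq_abs, abs_of_nonneg (hnn z)]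
      exact hbd z hz
    refine ⟨hint, ?_⟩
    calc ∫ z in closedBall (0:E) R, ‖z‖ ^ s
        ≤ ∫ _ in closedBall (0:E) R, R ^ s :=
          setIntegral_mono_on hint (integrableOn_const measure_closedBall_lt_top.ne)
            measurableSet_closedBall hbd
      _ = (volume (closedBall (0:E) R)).toReal * R ^ s := by
          rw [setIntegral_const, smul_eq_mul]; rfl
      _ = R ^ (d:ℝ) * v₁ * R ^ s := by
          rw [Measure.addHaar_closedBall _ _ hR.le, finrank_euclideanSpace_fin, hvol,
            ENNReal.toReal_mul, ENNReal.toReal_ofReal (by positivity),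
            ENNReal.toReal_ofReal hv₁pos.le, ← Real.rpow_natCast R d]
      _ ≤ (v₁ + 1) * R ^ (s + (d:ℝ)) := by
          rw [Real.rpow_add hR]
          have h3 : 0 ≤ R ^ (s:ℝ) := Real.rpow_nonneg hR.le _
          have h4 : 0 ≤ R ^ (d:ℝ) := Real.rpow_nonneg hR.le _
          nlinarith

lemma L2 (d : ℕ) (hd : 1 ≤ d) {s : ℝ} (hds : s < -(d:ℝ)) :
    ∃ c : ℝ, 0 < c ∧ ∀ R : ℝ, 0 < R →
      IntegrableOn (fun z : EuclideanSpace ℝ (Fin d) => ‖z‖ ^ s) (closedBall 0 R)ᶜ volume ∧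
      ∫ z in (closedBall (0:EuclideanSpace ℝ (Fin d)) R)ᶜ, ‖z‖ ^ s ≤ c * R ^ (s + (d:ℝ)) := by
  haveI : Nonempty (Fin d) := ⟨⟨0, hd⟩⟩
  set E := EuclideanSpace ℝ (Fin d)
  set v₁ : ℝ := (volume (ball (0:E) 1)).toReal with hv₁
  have hv₁fin : volume (ball (0:E) 1) ≠ ⊤ := measure_ball_lt_top.ne
  have hv₁pos : 0 < v₁ := ENNReal.toReal_pos (measure_ball_pos _ _ one_pos).ne' hv₁fin
  have hvol : volume (ball (0:E) 1) = ENNReal.ofReal v₁ := (ENNReal.ofReal_toReal hv₁fin).symm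
  have hmeas : Measurable (fun z : E => ‖z‖ ^ s) := by fun_prop
  have hnn : ∀ z : E, 0 ≤ ‖z‖ ^ s := fun z => Real.rpow_nonneg (norm_nonneg z) _
  have hd0 : (0:ℝ) < d := by exact_mod_cast hd
  have hs : s ≤ 0 := by linarith
  set u : ℝ := (2:ℝ) with hu
  have hu0 : (0:ℝ) < u := by norm_num
  set q : ℝ := u ^ (s + (d:ℝ)) with hq
  have hsd : s + (d:ℝ) < 0 := by linarith
  have hq0 : 0 ≤ q := Real.rpow_nonneg hu0.le _
  have hq1 : q < 1 := Real.rpow_lt_one_of_one_lt_of_neg (by norm_num) hsd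
  have hX : 0 < u ^ (d:ℝ) * (1 - q)⁻¹ * v₁ :=
    mul_pos (mul_pos (Real.rpow_pos_of_pos hu0 _) (inv_pos.mpr (by linarith))) hv₁pos
  refine ⟨u ^ (d:ℝ) * (1 - q)⁻¹ * v₁ + 1, by linarith, fun R hR => ?_⟩
  have hB : (0:ℝ) ≤ (u ^ (d:ℝ) * (1 - q)⁻¹ * v₁ + 1) * R ^ (s + (d:ℝ)) :=
    mul_nonneg (by linarith) (Real.rpow_nonneg hR.le _)
  refine of_lintegral_bound hmeas hnn hB ?_
  have key : ∫⁻ z in (closedBall (0:E) R)ᶜ, ENNReal.ofReal (‖z‖ ^ s)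
      ≤ ∑' k : ℕ, ∫⁻ z in closedBall (0:E) (R * u ^ (k+1)) \ closedBall 0 (R * u ^ k),
          ENNReal.ofReal (‖z‖ ^ s) :=
    le_trans (lintegral_mono_set (cover_compl hR)) (lintegral_iUnion_le _ _)
  have term : ∀ k : ℕ, ∫⁻ z in closedBall (0:E) (R * u ^ (k+1)) \ closedBall 0 (R * u ^ k),
      ENNReal.ofReal (‖z‖ ^ s)
      ≤ ENNReal.ofReal (R ^ (s + (d:ℝ)) * u ^ (d:ℝ)) * ENNReal.ofReal q ^ k
          * ENNReal.ofReal v₁ := by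
    intro k
    have h1 : (0:ℝ) < R * u ^ k := by positivity
    have h2 : (0:ℝ) ≤ R * u ^ (k+1) := by positivity
    calc ∫⁻ z in closedBall (0:E) (R * u ^ (k+1)) \ closedBall 0 (R * u ^ k),
          ENNReal.ofReal (‖z‖ ^ s)
        ≤ ENNReal.ofReal ((R * u ^ k) ^ s * (R * u ^ (k+1)) ^ (d:ℝ)) * volume (ball (0:E) 1) :=
          annulus_bound d hd h1 h2 hs
      _ = ENNReal.ofReal (R ^ (s + (d:ℝ)) * u ^ (d:ℝ)) * ENNReal.ofReal q ^ k
            * ENNReal.ofReal v₁ := by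
          rw [rpow_geom2 R u s d hR hu0, hvol,
            ENNReal.ofReal_mul (by positivity), ENNReal.ofReal_pow hq0]
  calc ∫⁻ z in (closedBall (0:E) R)ᶜ, ENNReal.ofReal (‖z‖ ^ s)
      ≤ ∑' k : ℕ, ENNReal.ofReal (R ^ (s + (d:ℝ)) * u ^ (d:ℝ)) * ENNReal.ofReal q ^ k
          * ENNReal.ofReal v₁ := key.trans (ENNReal.tsum_le_tsum term)
    _ = ENNReal.ofReal (R ^ (s + (d:ℝ)) * u ^ (d:ℝ)) * ENNReal.ofReal v₁
          * (1 - ENNReal.ofReal q)⁻¹ := by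
        rw [ENNReal.tsum_mul_right, ENNReal.tsum_mul_left, ENNReal.tsum_geometric]
        ring
    _ = ENNReal.ofReal (R ^ (s + (d:ℝ)) * u ^ (d:ℝ) * v₁ * (1-q)⁻¹) := by
        rw [← ENNReal.ofReal_one, ← ENNReal.ofReal_sub _ hq0,
          ← ENNReal.ofReal_inv_of_pos (by linarith : (0:ℝ) < 1 - q),
          ← ENNReal.ofReal_mul (by positivity),
          ← ENNReal.ofReal_mul (by positivity)]
    _ ≤ ENNReal.ofReal ((u ^ (d:ℝ) * (1 - q)⁻¹ * v₁ + 1) * R ^ (s + (d:ℝ))) := by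
        apply ENNReal.ofReal_le_ofReal
        have h3 : 0 ≤ R ^ (s + (d:ℝ)) := Real.rpow_nonneg hR.le _
        nlinarith [hX]


set_option maxHeartbeats 1000000 in
theorem energy_of_cutoff
    (d : ℕ) (hd : 1 ≤ d) (α : ℝ) (hα : α ∈ Set.Ioo (0 : ℝ) 2)
    (K : ℝ) (hK : 0 < K) :
    ∃ C > (0 : ℝ), ∀ l : ℝ, 1 ≤ l →
      ∀ f : EuclideanSpace ℝ (Fin d) → ℝ,
        (∀ x, f x ∈ Set.Icc (0 : ℝ) 1) →
        (∀ x : EuclideanSpace ℝ (Fin d), 2 * l ≤ ‖x‖ → f x = 0) →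
        (∀ x y : EuclideanSpace ℝ (Fin d), |f x - f y| ≤ (K / l) * ‖x - y‖) →
        fracD d α f ≤ C * l ^ ((d : ℝ) - α) := by
  classical
  obtain ⟨hα0, hα2⟩ := hα
  haveI : Nonempty (Fin d) := ⟨⟨0, hd⟩⟩
  set E := EuclideanSpace ℝ (Fin d)
  have hd0 : (0:ℝ) < d := by exact_mod_cast hd
  set v₁ : ℝ := (volume (ball (0:E) 1)).toReal with hv₁
  have hv₁fin : volume (ball (0:E) 1) ≠ ⊤ := measure_ball_lt_top.ne
  have hv₁pos : 0 < v₁ := ENNReal.toReal_pos (measure_ball_pos _ _ one_pos).ne' hv₁fin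
  -- exponents
  have hs₁ : -(d:ℝ) < 2 - ((d:ℝ) + α) := by linarith
  have hs₂ : -((d:ℝ) + α) < -(d:ℝ) := by linarith
  obtain ⟨c₁, hc₁, H₁⟩ := L1 d hd hs₁
  obtain ⟨c₂, hc₂, H₂⟩ := L2 d hd hs₂
  set C : ℝ := (K^2*c₁+c₂) * 4^(d:ℝ) * v₁ + 2^(d:ℝ) * v₁ * 2^((d:ℝ)+α) * c₂ * 4^(-α) with hC
  have hCpos : 0 < C := by
    have h1 : (0:ℝ) < (K^2*c₁+c₂) * 4^(d:ℝ) * v₁ := by positivity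
    have h2 : (0:ℝ) < 2^(d:ℝ) * v₁ * 2^((d:ℝ)+α) * c₂ * 4^(-α) := by positivity
    linarith
  refine ⟨C, hCpos, fun l hl f hf01 hsupp hLip => ?_⟩
  have hl0 : (0:ℝ) < l := by linarith
  have h2l0 : (0:ℝ) < 2*l := by linarith
  have h4l0 : (0:ℝ) < 4*l := by linarith
  -- nonnegativity of the integrand
  have hInn : ∀ x y : E, 0 ≤ (f x - f y) ^ 2 / ‖x - y‖ ^ ((d:ℝ) + α) := fun x y =>
    div_nonneg (sq_nonneg _) (Real.rpow_nonneg (norm_nonneg _) _)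
  -- the inner majorant M
  set M : E → ℝ := (closedBall (0:E) l).piecewise
      (fun z => (K/l)^2 * ‖z‖ ^ (2 - ((d:ℝ) + α))) (fun z => ‖z‖ ^ (-((d:ℝ) + α))) with hM
  have hMint : Integrable M := by
    refine Integrable.piecewise measurableSet_closedBall ?_ ?_
    · exact ((H₁ l hl0).1).const_mul _
    · exact (H₂ l hl0).1.mono_set (compl_subset_compl.2 subset_rfl)
  have hMnn : ∀ z, 0 ≤ M z := by
    intro z
    by_cases hz : z ∈ closedBall (0:E) l
    · rw [hM, piecewise_eq_of_mem _ _ _ hz]; positivity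
    · rw [hM, piecewise_eq_of_notMem _ _ _ hz]; positivity
  set A : ℝ := ∫ z, M z with hA
  -- A is bounded
  have hAle : A ≤ (K^2*c₁+c₂) * l^(-α) := by
    have e1 : A = (∫ z in closedBall (0:E) l, (K/l)^2 * ‖z‖ ^ (2 - ((d:ℝ) + α)))
        + ∫ z in (closedBall (0:E) l)ᶜ, ‖z‖ ^ (-((d:ℝ) + α)) := by
      rw [hA, hM, integral_piecewise measurableSet_closedBall
        (((H₁ l hl0).1).const_mul _) ((H₂ l hl0).1)]
    have e2 : ∫ z in closedBall (0:E) l, (K/l)^2 * ‖z‖ ^ (2 - ((d:ℝ) + α))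
        ≤ K^2*c₁*l^(-α) := by
      rw [integral_const_mul]
      have h := (H₁ l hl0).2
      have hb : (K/l)^2 * (∫ z in closedBall (0:E) l, ‖z‖ ^ (2 - ((d:ℝ) + α)))
          ≤ (K/l)^2 * (c₁ * l ^ (2 - ((d:ℝ) + α) + (d:ℝ))) :=
        mul_le_mul_of_nonneg_left h (by positivity)
      refine hb.trans_eq ?_
      rw [show (2 : ℝ) - ((d:ℝ) + α) + (d:ℝ) = 2 - α by ring, div_pow,
        Real.rpow_sub hl0 2 α, Real.rpow_neg hl0.le, Real.rpow_two]
      have hl' : (l:ℝ) ≠ 0 := hl0.ne'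
      have hlα : l ^ α ≠ 0 := (Real.rpow_pos_of_pos hl0 α).ne'
      field_simp
    have e3 : ∫ z in (closedBall (0:E) l)ᶜ, ‖z‖ ^ (-((d:ℝ) + α)) ≤ c₂*l^(-α) := by
      have h := (H₂ l hl0).2
      rwa [show -((d:ℝ) + α) + (d:ℝ) = -α by ring] at h
    rw [e1]
    have : (K^2*c₁+c₂) * l^(-α) = K^2*c₁*l^(-α) + c₂*l^(-α) := by ring
    linarith
  -- step 1 : inner integral bounded by A for all x
  have step1 : ∀ x : E, (∫ y, (f x - f y) ^ 2 / ‖x - y‖ ^ ((d:ℝ) + α)) ≤ A := by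
    intro x
    have hpt : ∀ y : E, (f x - f y) ^ 2 / ‖x - y‖ ^ ((d:ℝ) + α) ≤ M (x - y) := by
      intro y
      by_cases hz : (x - y) ∈ closedBall (0:E) l
      · rw [hM, piecewise_eq_of_mem _ _ _ hz]
        rcases eq_or_lt_of_le (norm_nonneg (x - y)) with hn0 | hn0
        · have : |f x - f y| ≤ 0 := by
            have := hLip x y; rw [← hn0] at this; simpa using this
          have hfxy : f x - f y = 0 := abs_eq_zero.1 (le_antisymm this (abs_nonneg _))
          rw [hfxy]
          simp only [ne_eq, OfNat.ofNat_ne_zero, not_false_eq_true, zero_pow, zero_div]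
          positivity
        · rw [div_le_iff₀ (Real.rpow_pos_of_pos hn0 _)]
          have key : (f x - f y)^2 ≤ (K/l)^2 * ‖x - y‖^2 := by
            have h1 := hLip x y
            have h2 : |f x - f y|^2 ≤ ((K/l) * ‖x - y‖)^2 := by
              apply pow_le_pow_left₀ (abs_nonneg _) h1
            rw [sq_abs] at h2
            calc (f x - f y)^2 ≤ ((K/l) * ‖x - y‖)^2 := h2
              _ = (K/l)^2 * ‖x - y‖^2 := by ring
          have e : ‖x - y‖ ^ (2 - ((d:ℝ) + α)) * ‖x - y‖ ^ ((d:ℝ) + α) = ‖x - y‖^2 := by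
            rw [← Real.rpow_add hn0]
            rw [show (2 : ℝ) - ((d:ℝ) + α) + ((d:ℝ) + α) = 2 by ring]
            rw [Real.rpow_two]
          calc (f x - f y)^2 ≤ (K/l)^2 * ‖x - y‖^2 := key
            _ = (K/l)^2 * ‖x - y‖ ^ (2 - ((d:ℝ) + α)) * ‖x - y‖ ^ ((d:ℝ) + α) := by
                rw [mul_assoc, e]
      · rw [hM, piecewise_eq_of_notMem _ _ _ hz]
        have hn : l < ‖x - y‖ := by
          simpa [mem_closedBall, dist_zero_right, not_le] using hz
        have hn0 : (0:ℝ) < ‖x - y‖ := lt_trans hl0 hn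
        have hfxy : (f x - f y)^2 ≤ 1 := by
          have h1 := (hf01 x).1; have h2 := (hf01 x).2
          have h3 := (hf01 y).1; have h4 := (hf01 y).2
          nlinarith
        calc (f x - f y)^2 / ‖x - y‖ ^ ((d:ℝ) + α)
            ≤ 1 / ‖x - y‖ ^ ((d:ℝ) + α) := by
              gcongr
          _ = ‖x - y‖ ^ (-((d:ℝ) + α)) := by
              rw [Real.rpow_neg hn0.le, one_div]
    calc (∫ y, (f x - f y) ^ 2 / ‖x - y‖ ^ ((d:ℝ) + α))
        ≤ ∫ y, M (x - y) :=
          integral_mono_of_nonneg (Filter.Eventually.of_forall (fun y => hInn x y))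
            (hMint.comp_sub_left x) (Filter.Eventually.of_forall hpt)
      _ = A := integral_sub_left_eq_self M volume x
  -- V : volume of ball 2l
  set V : ℝ := (volume (closedBall (0:E) (2*l))).toReal with hV
  have hVnn : 0 ≤ V := ENNReal.toReal_nonneg
  -- step 2 : decay bound for large x
  have step2 : ∀ x : E, 4*l ≤ ‖x‖ →
      (∫ y, (f x - f y) ^ 2 / ‖x - y‖ ^ ((d:ℝ) + α))
        ≤ (V * 2^((d:ℝ)+α)) * ‖x‖ ^ (-((d:ℝ) + α)) := by
    intro x hx
    have hxpos : (0:ℝ) < ‖x‖ := lt_of_lt_of_le h4l0 hx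
    set N : E → ℝ := (closedBall (0:E) (2*l)).indicator
        (fun _ => (‖x‖/2) ^ (-((d:ℝ) + α))) with hN
    have hfx : f x = 0 := hsupp x (by linarith)
    have hpt : ∀ y : E, (f x - f y) ^ 2 / ‖x - y‖ ^ ((d:ℝ) + α) ≤ N y := by
      intro y
      by_cases hy : y ∈ closedBall (0:E) (2*l)
      · rw [hN, indicator_of_mem hy]
        have hy' : ‖y‖ ≤ 2*l := by simpa [mem_closedBall, dist_zero_right] using hy
        have hdist : ‖x‖/2 ≤ ‖x - y‖ := by
          have := norm_sub_norm_le x y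
          have h5 : ‖x‖ - ‖y‖ ≤ ‖x - y‖ := by
            have := norm_sub_norm_le x y; linarith [this]
          linarith
        have hhalf : (0:ℝ) < ‖x‖/2 := by linarith
        have hfxy : (f x - f y)^2 ≤ 1 := by
          have h1 := (hf01 x).1; have h2 := (hf01 x).2
          have h3 := (hf01 y).1; have h4 := (hf01 y).2
          nlinarith
        calc (f x - f y)^2 / ‖x - y‖ ^ ((d:ℝ) + α)
            ≤ 1 / ‖x - y‖ ^ ((d:ℝ) + α) := by
              gcongr
          _ ≤ 1 / (‖x‖/2) ^ ((d:ℝ) + α) := by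
              apply one_div_le_one_div_of_le (Real.rpow_pos_of_pos hhalf _)
              exact Real.rpow_le_rpow hhalf.le hdist (by linarith)
          _ = (‖x‖/2) ^ (-((d:ℝ) + α)) := by
              rw [Real.rpow_neg hhalf.le, one_div]
      · rw [hN, indicator_of_notMem hy]
        have hy' : 2*l ≤ ‖y‖ := by
          have : 2*l < ‖y‖ := by
            simpa [mem_closedBall, dist_zero_right, not_le] using hy
          linarith
        have hfy : f y = 0 := hsupp y hy'
        rw [hfx, hfy]
        simp
    have hNint : Integrable N := by
      rw [hN, integrable_indicator_iff measurableSet_closedBall]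
      exact integrableOn_const measure_closedBall_lt_top.ne
    have hNval : ∫ y, N y = V * (‖x‖/2) ^ (-((d:ℝ) + α)) := by
      rw [hN, integral_indicator measurableSet_closedBall, setIntegral_const, smul_eq_mul, hV]; rfl
    have hhalf : (0:ℝ) < ‖x‖/2 := by linarith
    have e : (‖x‖/2) ^ (-((d:ℝ) + α)) = 2^((d:ℝ)+α) * ‖x‖ ^ (-((d:ℝ) + α)) := by
      rw [Real.div_rpow (norm_nonneg x) (by norm_num : (0:ℝ) ≤ 2),
        Real.rpow_neg (norm_nonneg x), Real.rpow_neg (by norm_num : (0:ℝ) ≤ 2)]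
      field_simp
    calc (∫ y, (f x - f y) ^ 2 / ‖x - y‖ ^ ((d:ℝ) + α))
        ≤ ∫ y, N y :=
          integral_mono_of_nonneg (Filter.Eventually.of_forall (fun y => hInn x y))
            hNint (Filter.Eventually.of_forall hpt)
      _ = V * (‖x‖/2) ^ (-((d:ℝ) + α)) := hNval
      _ = (V * 2^((d:ℝ)+α)) * ‖x‖ ^ (-((d:ℝ) + α)) := by rw [e]; ring
  -- the outer majorant
  set G : E → ℝ := (closedBall (0:E) (4*l)).piecewise (fun _ => A)
      (fun x => (V * 2^((d:ℝ)+α)) * ‖x‖ ^ (-((d:ℝ) + α))) with hG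
  have hGint : Integrable G := by
    refine Integrable.piecewise measurableSet_closedBall ?_ ?_
    · exact integrableOn_const measure_closedBall_lt_top.ne
    · exact ((H₂ (4*l) h4l0).1).const_mul _
  have hgle : ∀ x : E, (∫ y, (f x - f y) ^ 2 / ‖x - y‖ ^ ((d:ℝ) + α)) ≤ G x := by
    intro x
    by_cases hx : x ∈ closedBall (0:E) (4*l)
    · rw [hG, piecewise_eq_of_mem _ _ _ hx]; exact step1 x
    · rw [hG, piecewise_eq_of_notMem _ _ _ hx]
      have : 4*l < ‖x‖ := by
        simpa [mem_closedBall, dist_zero_right, not_le] using hx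
      exact step2 x this.le
  have hfrac : fracD d α f ≤ ∫ x, G x := by
    refine integral_mono_of_nonneg (Filter.Eventually.of_forall (fun x => ?_)) hGint
      (Filter.Eventually.of_forall hgle)
    exact integral_nonneg (fun y => hInn x y)
  -- compute the bound on ∫ G
  have hGval : ∫ x, G x = (volume (closedBall (0:E) (4*l))).toReal * A
      + (V * 2^((d:ℝ)+α)) * ∫ x in (closedBall (0:E) (4*l))ᶜ, ‖x‖ ^ (-((d:ℝ) + α)) := by
    rw [hG, integral_piecewise measurableSet_closedBall
      (integrableOn_const measure_closedBall_lt_top.ne)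
      (((H₂ (4*l) h4l0).1).const_mul _), setIntegral_const, smul_eq_mul, integral_const_mul]; rfl
  -- volumes
  have hvol4 : (volume (closedBall (0:E) (4*l))).toReal = (4*l)^(d:ℝ) * v₁ := by
    rw [Measure.addHaar_closedBall _ _ h4l0.le, finrank_euclideanSpace_fin,
      ENNReal.toReal_mul, ENNReal.toReal_ofReal (by positivity), ← Real.rpow_natCast (4*l) d]
  have hvol2 : V = (2*l)^(d:ℝ) * v₁ := by
    rw [hV, Measure.addHaar_closedBall _ _ h2l0.le, finrank_euclideanSpace_fin,
      ENNReal.toReal_mul, ENNReal.toReal_ofReal (by positivity), ← Real.rpow_natCast (2*l) d]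
  -- tail integral
  have htail : ∫ x in (closedBall (0:E) (4*l))ᶜ, ‖x‖ ^ (-((d:ℝ) + α)) ≤ c₂ * (4*l)^(-α) := by
    have h := (H₂ (4*l) h4l0).2
    rwa [show -((d:ℝ) + α) + (d:ℝ) = -α by ring] at h
  have htail0 : 0 ≤ ∫ x in (closedBall (0:E) (4*l))ᶜ, ‖x‖ ^ (-((d:ℝ) + α)) :=
    setIntegral_nonneg measurableSet_closedBall.compl
      (fun x _ => Real.rpow_nonneg (norm_nonneg x) _)
  -- assemble
  have final : ∫ x, G x ≤ C * l ^ ((d:ℝ) - α) := by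
    rw [hGval, hvol4, hvol2]
    have t1 : (4*l)^(d:ℝ) * v₁ * A ≤ (4*l)^(d:ℝ) * v₁ * ((K^2*c₁+c₂) * l^(-α)) :=
      mul_le_mul_of_nonneg_left hAle (by positivity)
    have t2 : ((2*l)^(d:ℝ) * v₁ * 2^((d:ℝ)+α)) *
        (∫ x in (closedBall (0:E) (4*l))ᶜ, ‖x‖ ^ (-((d:ℝ) + α)))
        ≤ ((2*l)^(d:ℝ) * v₁ * 2^((d:ℝ)+α)) * (c₂ * (4*l)^(-α)) :=
      mul_le_mul_of_nonneg_left htail (by positivity)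
    have e4 : (4*l)^(d:ℝ) = 4^(d:ℝ) * l^(d:ℝ) := Real.mul_rpow (by norm_num) hl0.le
    have e2 : (2*l)^(d:ℝ) = 2^(d:ℝ) * l^(d:ℝ) := Real.mul_rpow (by norm_num) hl0.le
    have e4' : (4*l)^(-α) = 4^(-α) * l^(-α) := Real.mul_rpow (by norm_num) hl0.le
    have eld : l^(d:ℝ) * l^(-α) = l^((d:ℝ) - α) := by
      rw [← Real.rpow_add hl0]; ring_nf
    have key : (4*l)^(d:ℝ) * v₁ * ((K^2*c₁+c₂) * l^(-α))
        + ((2*l)^(d:ℝ) * v₁ * 2^((d:ℝ)+α)) * (c₂ * (4*l)^(-α)) = C * l^((d:ℝ)-α) := by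
      rw [e4, e2, e4', hC, ← eld]; ring
    linarith [t1, t2]
  exact hfrac.trans final
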